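/- Let J be a nonempty finite index set, and for each j ∈ J let a_j > 0 and b_j ∈ ℝ. Then there exists a unique real number w with w < min_{j ∈ J} b_j such that Σ_{j ∈ J} a_j/(b_j − w) = 1. -/

import Mathlib

open scoped BigOperators Classical
open Filter

noncomputable section

def IsRowStochastic {M : ℕ} (P : Matrix (Fin M) (Fin M) ℝ) : Prop :=
  (∀ i j, 0 ≤ P i j) ∧ ∀ i, ∑ j, P i j = 1

def IsIrreducibleMat {M : ℕ} (P : Matrix (Fin M) (Fin M) ℝ) : Prop :=
  ∀ i j, ∃ n : ℕ, 1 ≤ n ∧ 0 < (P ^ n) i j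

def IsStationaryVec {M : ℕ} (P : Matrix (Fin M) (Fin M) ℝ) (π : Fin M → ℝ) : Prop :=
  (∀ i, 0 ≤ π i) ∧ (∑ i, π i = 1) ∧ ∀ j, ∑ i, π i * P i j = π j

def PiMat {M : ℕ} (r : Fin M → ℝ) (θ : ℝ) (A : Matrix (Fin M) (Fin M) ℝ) :
    Matrix (Fin M) (Fin M) ℝ :=
  Matrix.of fun i j => A i j * Real.exp (θ * r j)

def LambdaA {M : ℕ} (r : Fin M → ℝ) (θ : ℝ) (A : Matrix (Fin M) (Fin M) ℝ) : ℝ :=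
  Real.log ((spectralRadius ℝ (PiMat r θ A)).toReal)

def thetaStar {M : ℕ} (r : Fin M → ℝ) (c : ℝ) (A : Matrix (Fin M) (Fin M) ℝ) : ℝ :=
  sSup ({0} ∪ {θ : ℝ | 0 < θ ∧ LambdaA r θ A < θ * c})

def q1 {M : ℕ} (q : Fin M → Fin M → ℝ) (i : Fin M) : ℝ := ∑ j, q i j

def qf {M : ℕ} (q : Fin M → Fin M → ℝ) (i j : Fin M) : ℝ := q i j / q1 q i

def Qf {M : ℕ} (q : Fin M → Fin M → ℝ) : Matrix (Fin M) (Fin M) ℝ :=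
  Matrix.of fun i j => qf q i j

def Dset {M : ℕ} (q : Fin M → Fin M → ℝ) : Set (Matrix (Fin M) (Fin M) ℝ) :=
  {p | IsRowStochastic p ∧ ∀ i j, 0 < q i j → 0 < p i j}

def I3hat {M : ℕ} (q : Fin M → Fin M → ℝ) (p : Matrix (Fin M) (Fin M) ℝ) : ℝ :=
  ∑ i, q1 q i * ∑ j ∈ Finset.univ.filter (fun j => 0 < q i j),
    qf q i j * Real.log (qf q i j / p i j)

def thetaBar {M : ℕ} (r : Fin M → ℝ) (c : ℝ) (q : Fin M → Fin M → ℝ) (l s : ℝ)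
    (p : Matrix (Fin M) (Fin M) ℝ) : ℝ :=
  l * s * thetaStar r c p + I3hat q p

def I1set {M : ℕ} (r : Fin M → ℝ) (c : ℝ) : Set (Matrix (Fin M) (Fin M) ℝ) :=
  {P | IsRowStochastic P ∧ IsIrreducibleMat P ∧ ∃ π, IsStationaryVec P π ∧ ∑ i, π i * r i < c}

def I2set {M : ℕ} (r : Fin M → ℝ) (c : ℝ) : Set (Matrix (Fin M) (Fin M) ℝ) :=
  {P | IsRowStochastic P ∧ IsIrreducibleMat P ∧ ∃ π, IsStationaryVec P π ∧ c < ∑ i, π i * r i}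

def I3set {M : ℕ} (r : Fin M → ℝ) (c : ℝ) : Set (Matrix (Fin M) (Fin M) ℝ) :=
  {P | IsRowStochastic P ∧ IsIrreducibleMat P ∧ ∃ π, IsStationaryVec P π ∧ ∑ i, π i * r i = c}

def toMat {M : ℕ} (x : EuclideanSpace ℝ (Fin M × Fin M)) : Matrix (Fin M) (Fin M) ℝ :=
  Matrix.of fun i j => x (i, j)

def toEuc {M : ℕ} (A : Matrix (Fin M) (Fin M) ℝ) : EuclideanSpace ℝ (Fin M × Fin M) :=
  (WithLp.equiv 2 ((Fin M × Fin M) → ℝ)).symm (fun ij => A ij.1 ij.2)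

def frobInner {M : ℕ} (A B : Matrix (Fin M) (Fin M) ℝ) : ℝ := ∑ i, ∑ j, A i j * B i j

theorem stmt15 {ι : Type*} [DecidableEq ι] (J : Finset ι) (hJ : J.Nonempty)
    (a b : ι → ℝ) (ha : ∀ j ∈ J, 0 < a j) :
    ∃! w : ℝ, (∀ j ∈ J, w < b j) ∧ ∑ j ∈ J, a j / (b j - w) = 1 := by
  classical
  have hm : (J.image b).Nonempty := hJ.image b
  set m := (J.image b).min' hm with hm_def
  have hmle : ∀ j ∈ J, m ≤ b j := fun j hj =>
    Finset.min'_le _ _ (Finset.mem_image_of_mem b hj)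
  obtain ⟨j0, hj0, hbj0⟩ : ∃ j ∈ J, b j = m := by
    obtain ⟨x, hx, hxe⟩ := Finset.mem_image.mp ((J.image b).min'_mem hm)
    exact ⟨x, hx, hxe⟩
  set f : ℝ → ℝ := fun w => ∑ j ∈ J, a j / (b j - w) with hf
  have hmono : StrictMonoOn f (Set.Iio m) := by
    intro x hx y hy hxy
    apply Finset.sum_lt_sum_of_nonempty hJ
    intro j hj
    have h1 : 0 < b j - y := by
      have := hmle j hj; simp only [Set.mem_Iio] at hy; linarith
    exact div_lt_div_of_pos_left (ha j hj) h1 (by linarith)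
  -- upper point
  set w1 : ℝ := m - min (a j0) 1 with hw1
  have hminpos : 0 < min (a j0) 1 := lt_min (ha j0 hj0) one_pos
  have hw1m : w1 < m := sub_lt_self m hminpos
  have hfw1 : 1 ≤ f w1 := by
    have hterm : 1 ≤ a j0 / (b j0 - w1) := by
      rw [hbj0]
      have : m - w1 = min (a j0) 1 := by simp [hw1]
      rw [this, one_le_div hminpos]
      exact min_le_left _ _
    calc 1 ≤ a j0 / (b j0 - w1) := hterm
      _ ≤ f w1 := by
        apply Finset.single_le_sum (f := fun j => a j / (b j - w1)) _ hj0
        intro j hj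
        have h2 : 0 < b j - w1 := by have := hmle j hj; linarith
        exact le_of_lt (div_pos (ha j hj) h2)
  -- lower point
  have hne : (J.image (fun j => b j - J.card * a j)).Nonempty := hJ.image _
  set w0 : ℝ := (J.image (fun j => b j - J.card * a j)).min' hne with hw0
  have hcardpos : (0:ℝ) < J.card := by exact_mod_cast Finset.card_pos.mpr hJ
  have hw0le : ∀ j ∈ J, w0 ≤ b j - J.card * a j := fun j hj =>
    Finset.min'_le _ _ (Finset.mem_image_of_mem _ hj)
  have hw0lt : ∀ j ∈ J, w0 < b j := by
    intro j hj
    have h1 := hw0le j hj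
    have h2 : 0 < (J.card : ℝ) * a j := mul_pos hcardpos (ha j hj)
    linarith
  have hw0m : w0 < m := hbj0 ▸ hw0lt j0 hj0
  have hfw0 : f w0 ≤ 1 := by
    have : f w0 ≤ ∑ j ∈ J, (1 : ℝ) / J.card := by
      apply Finset.sum_le_sum
      intro j hj
      have h1 := hw0le j hj
      have h2 : (J.card : ℝ) * a j ≤ b j - w0 := by linarith
      have h3 : 0 < b j - w0 := by
        have := mul_pos hcardpos (ha j hj); linarith
      rw [div_le_div_iff₀ h3 hcardpos]
      calc a j * J.card = J.card * a j := by ring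
        _ ≤ b j - w0 := h2
        _ = 1 * (b j - w0) := by ring
    have : f w0 ≤ (J.card : ℝ) * (1 / J.card) := by
      simpa [Finset.sum_const, nsmul_eq_mul] using this
    calc f w0 ≤ (J.card : ℝ) * (1 / J.card) := this
      _ = 1 := by field_simp
  have hle01 : w0 ≤ w1 := by
    by_contra h
    push_neg at h
    have := hmono (Set.mem_Iio.mpr hw1m) (Set.mem_Iio.mpr hw0m) h
    linarith
  have hcont : ContinuousOn f (Set.Icc w0 w1) := by
    apply continuousOn_finset_sum
    intro j hj
    apply ContinuousOn.div continuousOn_const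
    · exact (continuous_const.sub continuous_id).continuousOn
    · intro x hx
      have hx1 : x ≤ w1 := hx.2
      have : x < b j := lt_of_le_of_lt hx1 (lt_of_lt_of_le hw1m (hmle j hj))
      intro hc
      linarith [sub_eq_zero.mp hc]
  have hIVT := intermediate_value_Icc hle01 hcont
  have h1mem : (1 : ℝ) ∈ Set.Icc (f w0) (f w1) := ⟨hfw0, hfw1⟩
  obtain ⟨w, hwmem, hwf⟩ := hIVT h1mem
  refine ⟨w, ⟨?_, hwf⟩, ?_⟩
  · intro j hj
    exact lt_of_le_of_lt hwmem.2 (lt_of_lt_of_le hw1m (hmle j hj))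
  · intro y hy
    have hymem : y ∈ Set.Iio m := Set.mem_Iio.mpr (hbj0 ▸ hy.1 j0 hj0)
    have hwm : w ∈ Set.Iio m :=
      Set.mem_Iio.mpr (lt_of_le_of_lt hwmem.2 hw1m)
    have : f y = f w := by rw [hwf]; exact hy.2
    exact hmono.injOn hymem hwm this
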